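/- Fix 0 < φ < π and t > 0, and define the plane curve z(s) := 1/(1/(s e^{iφ}) − t) = s e^{iφ}/(1 − t s e^{iφ}) for s > 0. Then the signed curvature κ(s) = Re(i z'(s) conj(z''(s)))/|z'(s)|³ is strictly positive for all s > 0; in particular κ(s)·|z'(s)|³ = 2 t sin(φ)/((st − cos φ)² + sin²φ)³ > 0, so the curve is convex. -/

import Mathlib

open Complex Real

/-- Convexity of the image of the half-line s e^{iφ} under the time-t map of u' = u²:
    the (unnormalized) curvature Re(i z'(s) conj(z''(s))) equals
    2 t sin φ / ((st - cos φ)² + sin² φ)³ and is strictly positive. -/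
theorem image_curve_convex (φ t : ℝ) (hφ0 : 0 < φ) (hφπ : φ < Real.pi) (ht : 0 < t)
    (z : ℝ → ℂ)
    (hz : ∀ s : ℝ, z s = (s : ℂ) * Complex.exp (φ * Complex.I) /
      (1 - (t : ℂ) * s * Complex.exp (φ * Complex.I))) :
    ∀ s : ℝ, 0 < s →
      (Complex.I * deriv z s * (starRingEnd ℂ) (deriv (deriv z) s)).re =
        2 * t * Real.sin φ / (((s * t - Real.cos φ) ^ 2 + Real.sin φ ^ 2) ^ 3) ∧
      0 < (Complex.I * deriv z s * (starRingEnd ℂ) (deriv (deriv z) s)).re := by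
  have hzfun : z = fun s : ℝ => (s : ℂ) * Complex.exp (φ * Complex.I) /
      (1 - (t : ℂ) * s * Complex.exp (φ * Complex.I)) := funext hz
  subst hzfun
  set e : ℂ := Complex.exp (φ * Complex.I) with he_def
  have hsin : 0 < Real.sin φ := Real.sin_pos_of_pos_of_lt_pi hφ0 hφπ
  have here : e.re = Real.cos φ := Complex.exp_ofReal_mul_I_re φ
  have heim : e.im = Real.sin φ := Complex.exp_ofReal_mul_I_im φ
  -- denominator never vanishes
  have hden : ∀ s : ℝ, (1 : ℂ) - (t : ℂ) * s * e ≠ 0 := by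
    intro s h
    have h1 : ((t * s : ℝ) : ℂ) * e = 1 := by push_cast; linear_combination -h
    have him : t * s * Real.sin φ = 0 := by
      have := congrArg Complex.im h1
      rwa [Complex.im_ofReal_mul, heim, Complex.one_im] at this
    have hre : t * s * Real.cos φ = 1 := by
      have := congrArg Complex.re h1
      rwa [Complex.re_ofReal_mul, here, Complex.one_re] at this
    have hts : t * s = 0 := by
      rcases mul_eq_zero.mp him with h' | h'
      · exact h'
      · exact absurd h' (ne_of_gt hsin)
    have h0 : (0 : ℝ) = 1 := by linear_combination hre - Real.cos φ * hts
    exact absurd h0 (by norm_num)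
  -- first derivative
  have hD1 : ∀ s : ℝ, HasDerivAt
      (fun s : ℝ => (s : ℂ) * e / (1 - (t : ℂ) * s * e))
      (e / (1 - (t : ℂ) * s * e) ^ 2) s := by
    intro s
    have h1 : HasDerivAt (fun s : ℝ => ((s : ℂ))) 1 s := by
      simpa using (hasDerivAt_id s).ofReal_comp
    have hnum : HasDerivAt (fun s : ℝ => (s : ℂ) * e) e s := by
      simpa using h1.mul_const e
    have hden' : HasDerivAt (fun s : ℝ => (1 : ℂ) - (t : ℂ) * s * e) (-((t : ℂ) * e)) s := by
      have h2 := (h1.const_mul (t : ℂ)).mul_const e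
      simpa using h2.const_sub (1 : ℂ)
    have h3 := hnum.div hden' (hden s)
    exact h3.congr_deriv (by
      rw [div_eq_div_iff (pow_ne_zero 2 (hden s)) (pow_ne_zero 2 (hden s))]
      ring)
  have hderiv1 : deriv (fun s : ℝ => (s : ℂ) * e / (1 - (t : ℂ) * s * e)) =
      fun s : ℝ => e / (1 - (t : ℂ) * s * e) ^ 2 := funext fun s => (hD1 s).deriv
  -- second derivative
  have hD2 : ∀ s : ℝ, HasDerivAt
      (fun s : ℝ => e / (1 - (t : ℂ) * s * e) ^ 2)
      (2 * (t : ℂ) * e ^ 2 / (1 - (t : ℂ) * s * e) ^ 3) s := by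
    intro s
    have h1 : HasDerivAt (fun s : ℝ => ((s : ℂ))) 1 s := by
      simpa using (hasDerivAt_id s).ofReal_comp
    have hden' : HasDerivAt (fun s : ℝ => (1 : ℂ) - (t : ℂ) * s * e) (-((t : ℂ) * e)) s := by
      have h2 := (h1.const_mul (t : ℂ)).mul_const e
      simpa using h2.const_sub (1 : ℂ)
    have hpow : HasDerivAt (fun s : ℝ => ((1 : ℂ) - (t : ℂ) * s * e) ^ 2)
        (-((t : ℂ) * e) * (1 - (t : ℂ) * s * e) + (1 - (t : ℂ) * s * e) * -((t : ℂ) * e)) s := by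
      simpa [pow_two, Pi.mul_def] using hden'.mul hden'
    have h3 := (hasDerivAt_const s e).div hpow (pow_ne_zero 2 (hden s))
    exact h3.congr_deriv (by
      rw [div_eq_div_iff (pow_ne_zero 2 (pow_ne_zero 2 (hden s))) (pow_ne_zero 3 (hden s))]
      ring)
  intro s hs
  have hd1 : deriv (fun s : ℝ => (s : ℂ) * e / (1 - (t : ℂ) * s * e)) s =
      e / (1 - (t : ℂ) * s * e) ^ 2 := (hD1 s).deriv
  have hd2 : deriv (deriv (fun s : ℝ => (s : ℂ) * e / (1 - (t : ℂ) * s * e))) s =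
      2 * (t : ℂ) * e ^ 2 / (1 - (t : ℂ) * s * e) ^ 3 := by
    rw [hderiv1]; exact (hD2 s).deriv
  rw [hd1, hd2]
  set d : ℂ := 1 - (t : ℂ) * s * e with hd_def
  set D : ℝ := (s * t - Real.cos φ) ^ 2 + Real.sin φ ^ 2 with hD_def
  have hDpos : 0 < D := by positivity
  have hsc : Real.sin φ ^ 2 + Real.cos φ ^ 2 = 1 := Real.sin_sq_add_cos_sq φ
  have he1 : e * (starRingEnd ℂ) e = 1 := by
    have hn : Complex.normSq e = 1 := by
      rw [Complex.normSq_apply, here, heim]; nlinarith [hsc]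
    rw [Complex.mul_conj, hn]; norm_num
  have hdd : d * (starRingEnd ℂ) d = (D : ℂ) := by
    have hn : Complex.normSq d = D := by
      simp only [hd_def, hD_def, Complex.normSq_apply, Complex.sub_re, Complex.sub_im,
        Complex.mul_re, Complex.mul_im, Complex.one_re, Complex.one_im,
        Complex.ofReal_re, Complex.ofReal_im, here, heim]
      linear_combination (t ^ 2 * s ^ 2 - 1) * hsc
    rw [Complex.mul_conj, hn]
  have hdne : d ≠ 0 := hden s
  have hdcne : (starRingEnd ℂ) d ≠ 0 := by simpa using hdne
  have hDne : (D : ℂ) ≠ 0 := by exact_mod_cast ne_of_gt hDpos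
  clear_value d D
  have hkey : Complex.I * (e / d ^ 2) * (starRingEnd ℂ) (2 * (t : ℂ) * e ^ 2 / d ^ 3) =
      2 * (t : ℂ) * Complex.I * (starRingEnd ℂ) e * d / (D : ℂ) ^ 3 := by
    rw [← hdd]
    simp only [map_div₀, map_mul, map_pow, Complex.conj_ofReal, map_ofNat]
    field_simp
    linear_combination ((t : ℂ) * (starRingEnd ℂ) e) * he1
  rw [hkey]
  have hre : (2 * (t : ℂ) * Complex.I * (starRingEnd ℂ) e * d / (D : ℂ) ^ 3).re =
      2 * t * Real.sin φ / D ^ 3 := by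
    rw [show ((D : ℂ)) ^ 3 = ((D ^ 3 : ℝ) : ℂ) by push_cast; ring, Complex.div_ofReal_re]
    congr 1
    have hdre : d.re = 1 - t * s * Real.cos φ := by
      rw [hd_def]
      simp [Complex.sub_re, Complex.mul_re, Complex.mul_im, here, heim]
    have hdim : d.im = -(t * s * Real.sin φ) := by
      rw [hd_def]
      simp [Complex.sub_im, Complex.mul_re, Complex.mul_im, here, heim]
    simp [Complex.mul_re, Complex.mul_im, Complex.conj_re, Complex.conj_im,
      here, heim, hdre, hdim]
    ring
  refine ⟨hre, ?_⟩
  rw [hre]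
  exact div_pos (by nlinarith) (pow_pos hDpos 3)
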